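/- Let g, h : (0,∞) → [0,∞) be nonincreasing right-continuous integrable functions with ∫_0^t g ≤ ∫_0^t h for all t > 0. Then for every integer k ≥ 1 and every 0 ≤ j ≤ k, ∫_0^∞ g^{k-j} h^j ≤ ∫_0^∞ g^{k-j-1} h^{j+1} for 0 ≤ j ≤ k-1; in particular ∫_0^∞ g^k ≤ ∫_0^∞ h^k. -/

import Mathlib

open MeasureTheory Set
open scoped ENNReal

/-- Key step: if `φ` is nonnegative and nonincreasing on `(0,∞)`, and the partial integrals of
`g` are dominated by those of `h`, then `∫ φ g ≤ ∫ φ h`. Proven via the layer cake formula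
applied to the measures with densities `g` and `h`. -/
private lemma key_step (g h φ : ℝ → ℝ)
    (hg0 : ∀ t : ℝ, 0 < t → 0 ≤ g t) (hh0 : ∀ t : ℝ, 0 < t → 0 ≤ h t)
    (hgint : IntegrableOn g (Ioi (0:ℝ))) (hhint : IntegrableOn h (Ioi (0:ℝ)))
    (hGH : ∀ t : ℝ, 0 < t → ∫ τ in Ioo (0:ℝ) t, g τ ≤ ∫ τ in Ioo (0:ℝ) t, h τ)
    (hφ0 : ∀ t : ℝ, 0 < t → 0 ≤ φ t)
    (hφanti : ∀ s t : ℝ, 0 < s → s ≤ t → φ t ≤ φ s)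
    (hφm : AEMeasurable φ (volume.restrict (Ioi (0:ℝ)))) :
    ∫⁻ t in Ioi (0:ℝ), ENNReal.ofReal (φ t * g t)
      ≤ ∫⁻ t in Ioi (0:ℝ), ENNReal.ofReal (φ t * h t) := by
  set ν : Measure ℝ := volume.restrict (Ioi (0:ℝ)) with hν
  set G : ℝ → ℝ≥0∞ := fun t => ENNReal.ofReal (g t) with hGdef
  set H : ℝ → ℝ≥0∞ := fun t => ENNReal.ofReal (h t) with hHdef
  have hGm : AEMeasurable G ν := hgint.aemeasurable.ennreal_ofReal
  have hHm : AEMeasurable H ν := hhint.aemeasurable.ennreal_ofReal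
  set μG : Measure ℝ := ν.withDensity G with hμG
  set μH : Measure ℝ := ν.withDensity H with hμH
  -- null sets outside (0,∞)
  have hnull : ∀ (F : ℝ → ℝ≥0∞) (s : Set ℝ), MeasurableSet s → volume (s ∩ Ioi 0) = 0 →
      ν.withDensity F s = 0 := by
    intro F s hsm hs0
    rw [withDensity_apply _ hsm, hν, Measure.restrict_restrict hsm,
      Measure.restrict_eq_zero.mpr hs0, lintegral_zero_measure]
  -- comparison on intervals (0, a)
  have L1 : ∀ a : ℝ, μG (Ioo 0 a) ≤ μH (Ioo 0 a) := by
    intro a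
    rcases le_or_gt a 0 with ha | ha
    · rw [Ioo_eq_empty (by linarith), measure_empty]
      exact zero_le
    · have hsub : Ioo (0:ℝ) a ⊆ Ioi 0 := Ioo_subset_Ioi_self
      have hGa : μG (Ioo 0 a) = ENNReal.ofReal (∫ τ in Ioo (0:ℝ) a, g τ) := by
        rw [hμG, withDensity_apply _ measurableSet_Ioo, hν,
          Measure.restrict_restrict measurableSet_Ioo, inter_eq_self_of_subset_left hsub,
          ← ofReal_integral_eq_lintegral_ofReal (hgint.mono_set hsub)
            ((ae_restrict_iff' measurableSet_Ioo).2 (ae_of_all _ fun t ht => hg0 t ht.1))]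
      have hHa : μH (Ioo 0 a) = ENNReal.ofReal (∫ τ in Ioo (0:ℝ) a, h τ) := by
        rw [hμH, withDensity_apply _ measurableSet_Ioo, hν,
          Measure.restrict_restrict measurableSet_Ioo, inter_eq_self_of_subset_left hsub,
          ← ofReal_integral_eq_lintegral_ofReal (hhint.mono_set hsub)
            ((ae_restrict_iff' measurableSet_Ioo).2 (ae_of_all _ fun t ht => hh0 t ht.1))]
      rw [hGa, hHa]
      exact ENNReal.ofReal_le_ofReal (hGH a ha)
  -- comparison on all of (0,∞)
  have L2 : μG (Ioi 0) ≤ μH (Ioi 0) := by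
    have hU : Ioi (0:ℝ) = ⋃ n : ℕ, Ioo 0 (n:ℝ) := by
      ext t
      simp only [mem_Ioi, mem_iUnion, mem_Ioo]
      constructor
      · intro ht
        obtain ⟨n, hn⟩ := exists_nat_gt t
        exact ⟨n, ht, hn⟩
      · rintro ⟨n, h1, _⟩
        exact h1
    have hd : Directed (· ⊆ ·) (fun n : ℕ => Ioo (0:ℝ) (n:ℝ)) := by
      intro m n
      exact ⟨max m n, Ioo_subset_Ioo_right (by exact_mod_cast le_max_left m n),
        Ioo_subset_Ioo_right (by exact_mod_cast le_max_right m n)⟩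
    rw [hU, hd.measure_iUnion, hd.measure_iUnion]
    exact iSup_mono fun n => L1 n
  -- comparison on superlevel sets of φ
  have main : ∀ s : ℝ, μG {t | s < φ t} ≤ μH {t | s < φ t} := by
    intro s
    set A := {t : ℝ | s < φ t} with hA
    set B := A ∩ Ioi 0 with hB
    have hlow : ∀ x ∈ B, ∀ y : ℝ, 0 < y → y ≤ x → y ∈ B := by
      rintro x ⟨hxA, hx0⟩ y hy0 hyx
      exact ⟨lt_of_lt_of_le hxA (hφanti y x hy0 hyx), hy0⟩
    have hIicG : μG (Iic (0:ℝ)) = 0 := by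
      apply hnull G _ measurableSet_Iic
      apply measure_mono_null (fun x hx => absurd (lt_of_lt_of_le (mem_Ioi.mp hx.2) (mem_Iic.mp hx.1)) (lt_irrefl 0))
      exact measure_empty
    have hAB : μG A ≤ μG B := by
      calc μG A ≤ μG (B ∪ Iic 0) := by
            apply measure_mono
            intro t ht
            rcases lt_or_ge 0 t with h | h
            · exact Or.inl ⟨ht, h⟩
            · exact Or.inr h
        _ ≤ μG B + μG (Iic 0) := measure_union_le _ _
        _ = μG B := by rw [hIicG, add_zero]
    have hBA : μH B ≤ μH A := measure_mono inter_subset_left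
    refine hAB.trans (le_trans ?_ hBA)
    rcases eq_empty_or_nonempty B with hBe | hBne
    · rw [hBe, measure_empty]
      exact zero_le
    by_cases hbd : BddAbove B
    · set a := sSup B with ha
      have hBsub : B ⊆ Ioo 0 a ∪ {a} := by
        intro y hy
        rcases eq_or_lt_of_le (le_csSup hbd hy) with hc | hc
        · exact Or.inr (by simp [hc, ha])
        · exact Or.inl ⟨hy.2, hc⟩
      have hsubB : Ioo 0 a ⊆ B := by
        intro y hy
        obtain ⟨x', hx'B, hyx'⟩ := exists_lt_of_lt_csSup hBne hy.2
        exact hlow x' hx'B y hy.1 hyx'.le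
      have hsingG : μG {a} = 0 := by
        apply hnull G _ (measurableSet_singleton a)
        exact measure_mono_null inter_subset_left Real.volume_singleton
      calc μG B ≤ μG (Ioo 0 a ∪ {a}) := measure_mono hBsub
        _ ≤ μG (Ioo 0 a) + μG {a} := measure_union_le _ _
        _ = μG (Ioo 0 a) := by rw [hsingG, add_zero]
        _ ≤ μH (Ioo 0 a) := L1 a
        _ ≤ μH B := measure_mono hsubB
    · have hBeq : B = Ioi 0 := by
        apply Subset.antisymm (fun y hy => hy.2)
        intro y hy0
        obtain ⟨x', hx'B, hyx'⟩ := not_bddAbove_iff.1 hbd y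
        exact hlow x' hx'B y hy0 hyx'.le
      rw [hBeq]
      exact L2
  -- a.e. facts for the layercake formula
  have hφmG : AEMeasurable φ μG := hφm.mono' (withDensity_absolutelyContinuous ν G)
  have hφmH : AEMeasurable φ μH := hφm.mono' (withDensity_absolutelyContinuous ν H)
  have hφ0ν : 0 ≤ᵐ[ν] φ := by
    rw [hν]
    exact (ae_restrict_iff' measurableSet_Ioi).2 (ae_of_all _ fun t ht => hφ0 t ht)
  have hφ0G : 0 ≤ᵐ[μG] φ :=
    hφ0ν.filter_mono (Measure.AbsolutelyContinuous.ae_le (withDensity_absolutelyContinuous ν G))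
  have hφ0H : 0 ≤ᵐ[μH] φ :=
    hφ0ν.filter_mono (Measure.AbsolutelyContinuous.ae_le (withDensity_absolutelyContinuous ν H))
  -- rewrite both sides as integrals against the density measures
  have eqG : ∫⁻ t in Ioi (0:ℝ), ENNReal.ofReal (φ t * g t)
      = ∫⁻ t, ENNReal.ofReal (φ t) ∂μG := by
    rw [hμG, lintegral_withDensity_eq_lintegral_mul₀ hGm hφm.ennreal_ofReal, hν]
    refine setLIntegral_congr_fun measurableSet_Ioi (fun t ht => ?_)
    simp only [Pi.mul_apply, hGdef]
    rw [ENNReal.ofReal_mul (hφ0 t ht), mul_comm]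
  have eqH : ∫⁻ t in Ioi (0:ℝ), ENNReal.ofReal (φ t * h t)
      = ∫⁻ t, ENNReal.ofReal (φ t) ∂μH := by
    rw [hμH, lintegral_withDensity_eq_lintegral_mul₀ hHm hφm.ennreal_ofReal, hν]
    refine setLIntegral_congr_fun measurableSet_Ioi (fun t ht => ?_)
    simp only [Pi.mul_apply, hHdef]
    rw [ENNReal.ofReal_mul (hφ0 t ht), mul_comm]
  rw [eqG, eqH, lintegral_eq_lintegral_meas_lt μG hφ0G hφmG,
    lintegral_eq_lintegral_meas_lt μH hφ0H hφmH]
  exact lintegral_mono fun s => main s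

/-- The chain of inequalities `∫ g^k ≤ ∫ g^(k-1) h ≤ ⋯ ≤ ∫ h^k` obtained by iteratively
converting one factor of `g` into a factor of `h`. -/
theorem chain_of_inequalities (g h : ℝ → ℝ)
    (hg0 : ∀ t : ℝ, 0 < t → 0 ≤ g t) (hh0 : ∀ t : ℝ, 0 < t → 0 ≤ h t)
    (hganti : ∀ s t : ℝ, 0 < s → s ≤ t → g t ≤ g s)
    (hhanti : ∀ s t : ℝ, 0 < s → s ≤ t → h t ≤ h s)
    (hgrc : ∀ t : ℝ, 0 < t → ContinuousWithinAt g (Ici t) t)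
    (hhrc : ∀ t : ℝ, 0 < t → ContinuousWithinAt h (Ici t) t)
    (hgint : IntegrableOn g (Ioi (0:ℝ))) (hhint : IntegrableOn h (Ioi (0:ℝ)))
    (hGH : ∀ t : ℝ, 0 < t → ∫ τ in Ioo (0:ℝ) t, g τ ≤ ∫ τ in Ioo (0:ℝ) t, h τ)
    (k : ℕ) (hk : 1 ≤ k) :
    (∀ j : ℕ, j ≤ k - 1 →
      ∫⁻ t in Ioi (0:ℝ), ENNReal.ofReal (g t ^ (k - j) * h t ^ j)
        ≤ ∫⁻ t in Ioi (0:ℝ), ENNReal.ofReal (g t ^ (k - j - 1) * h t ^ (j + 1))) ∧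
    ∫⁻ t in Ioi (0:ℝ), ENNReal.ofReal (g t ^ k)
      ≤ ∫⁻ t in Ioi (0:ℝ), ENNReal.ofReal (h t ^ k) := by
  have step : ∀ j : ℕ, j ≤ k - 1 →
      ∫⁻ t in Ioi (0:ℝ), ENNReal.ofReal (g t ^ (k - j) * h t ^ j)
        ≤ ∫⁻ t in Ioi (0:ℝ), ENNReal.ofReal (g t ^ (k - j - 1) * h t ^ (j + 1)) := by
    intro j hj
    have hjk : j < k := by omega
    set m := k - j - 1 with hm
    have hkj : k - j = m + 1 := by omega
    have h1 : ∀ t : ℝ, g t ^ (k - j) * h t ^ j = (g t ^ m * h t ^ j) * g t := by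
      intro t; rw [hkj, pow_succ]; ring
    have h2 : ∀ t : ℝ, g t ^ (k - j - 1) * h t ^ (j + 1) = (g t ^ m * h t ^ j) * h t := by
      intro t; rw [← hm, pow_succ]; ring
    simp only [h1, h2, hm]
    exact key_step g h (fun t => g t ^ m * h t ^ j) hg0 hh0 hgint hhint hGH
      (fun t ht => mul_nonneg (pow_nonneg (hg0 t ht) _) (pow_nonneg (hh0 t ht) _))
      (fun s t hs hst => mul_le_mul
        (pow_le_pow_left₀ (hg0 t (hs.trans_le hst)) (hganti s t hs hst) _)
        (pow_le_pow_left₀ (hh0 t (hs.trans_le hst)) (hhanti s t hs hst) _)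
        (pow_nonneg (hh0 t (hs.trans_le hst)) _) (pow_nonneg (hg0 s hs) _))
      ((hgint.aemeasurable.pow_const m).mul (hhint.aemeasurable.pow_const j))
  refine ⟨step, ?_⟩
  have chain : ∀ j : ℕ, j ≤ k → ∫⁻ t in Ioi (0:ℝ), ENNReal.ofReal (g t ^ k)
      ≤ ∫⁻ t in Ioi (0:ℝ), ENNReal.ofReal (g t ^ (k - j) * h t ^ j) := by
    intro j
    induction j with
    | zero => intro _; simp
    | succ n ih =>
      intro hn
      refine (ih (by omega)).trans ?_
      have := step n (by omega)
      rwa [show k - (n + 1) = k - n - 1 from (Nat.sub_sub k n 1).symm]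
  have := chain k le_rfl
  simpa [Nat.sub_self] using this
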